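/- Let J ⊆ ℕ be a finite nonempty set and let y = ∏_{j∈J} X (j+1) ∈ B. For s ∈ ℕ, the component (π_s ⊗ id)(ψ_B(y)) is nonzero if and only if s = Σ_{j∈J′} (2^(j+1) − 1) for some subset J′ ⊆ J. (This computes the set S(y) of first-factor dimensions occurring in the coproduct of the top class of Bβ_{2k}.) -/

import Mathlib

open MvPolynomial TensorProduct

/-- The field 𝔽₂. -/
abbrev F2 : Type := ZMod 2

/-- The polynomial ring `𝔽₂[X 0, X 1, X 2, …]`, used as a model both for
`H_*(∐ₖ Ratₖ; 𝔽₂) = 𝔽₂[g, g⁻¹Qg, Q(g⁻¹Qg), …]` (the "R" model, where `X 0 = g` and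
`X (i+1) = Qⁱ(g⁻¹Qg)`) and for `H_*(∐ₙ Bβₙ; 𝔽₂) = 𝔽₂[g, Qg, Q²g, …]`
(the "B" model, where `X i = Qⁱg`). -/
abbrev P : Type := MvPolynomial ℕ F2

/-- Weight of the variable `X i` in the braid model `B`: `wt(Qⁱg) = 2^i`. -/
def wB : ℕ → ℕ := fun i => 2 ^ i

/-- Dimension of the variable `X i` in the braid model `B`: `dim(Qⁱg) = 2^i - 1`. -/
def dB : ℕ → ℕ := fun i => 2 ^ i - 1

/-- Weight of the variable `X i` in the Rat model `R`: `wt(g) = 1`,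
`wt(Qⁱ(g⁻¹Qg)) = 2^i`. -/
def wR : ℕ → ℕ := fun i => match i with
  | 0 => 1
  | j + 1 => 2 ^ j

/-- Dimension of the variable `X i` in the Rat model `R`: `dim(g) = 0`,
`dim(Qⁱ(g⁻¹Qg)) = 2^(i+1) - 1`. -/
def dR : ℕ → ℕ := fun i => match i with
  | 0 => 0
  | j + 1 => 2 ^ (j + 1) - 1

/-- The weight (resp. dimension) of a monomial with exponent vector `m`: the sum,
with multiplicity, of the weights (resp. dimensions) `w i` of its variables. -/
def mwt (w : ℕ → ℕ) (m : ℕ →₀ ℕ) : ℕ := m.sum fun i e => e * w i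

/-- A polynomial is homogeneous of weight (resp. dimension) `n` with respect to the
variable-weight function `w` if every monomial in its support has weight
(resp. dimension) `n`. -/
def Homog (w : ℕ → ℕ) (n : ℕ) (x : P) : Prop := ∀ m ∈ x.support, mwt w m = n

/-- The 𝔽₂-linear span of the monomials of weight `n`. -/
noncomputable def spanWt (w : ℕ → ℕ) (n : ℕ) : Submodule F2 P :=
  Submodule.span F2 {p : P | ∃ m : ℕ →₀ ℕ, mwt w m = n ∧ p = monomial m 1}

/-- The image `N ⊗ M` inside `P ⊗ P` of two submodules `N, M ⊆ P`. -/
noncomputable def tensorSub (N M : Submodule F2 P) : Submodule F2 (P ⊗[F2] P) :=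
  Submodule.span F2 {t : P ⊗[F2] P | ∃ a ∈ N, ∃ b ∈ M, t = a ⊗ₜ[F2] b}

/-- `Q` is the Araki–Kudo operation on the Rat model: the 𝔽₂-linear map with
`Q(X 0) = X 0 · X 1`, `Q(X (i+1)) = X (i+2)`, and the Cartan formula
`Q(uv) = u²Q(v) + Q(u)v²`. -/
def IsQ (Q : P →ₗ[F2] P) : Prop :=
  Q (X 0) = X 0 * X 1 ∧ (∀ i : ℕ, Q (X (i + 1)) = X (i + 2)) ∧
    ∀ u v : P, Q (u * v) = u ^ 2 * Q v + Q u * v ^ 2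

/-- `ψ` is the coproduct on the braid model `B`: the 𝔽₂-algebra map with
`ψ(g) = g ⊗ g` and `ψ(Qⁱg) = g^(2^i) ⊗ Qⁱg + Qⁱg ⊗ g^(2^i)` for `i ≥ 1`. -/
def IsPsiB (ψ : P →ₐ[F2] P ⊗[F2] P) : Prop :=
  ψ (X 0) = X 0 ⊗ₜ[F2] X 0 ∧
    ∀ i : ℕ, 1 ≤ i →
      ψ (X i) = ((X 0) ^ (2 ^ i)) ⊗ₜ[F2] (X i) + (X i) ⊗ₜ[F2] ((X 0) ^ (2 ^ i))

/-- `ψ` is the coproduct on the Rat model `R` (with Araki–Kudo operation `Q`):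
the 𝔽₂-algebra map with `ψ(g) = g ⊗ g`, `ψ(g⁻¹Qg) = g ⊗ g⁻¹Qg + g⁻¹Qg ⊗ g`, and
`ψ(Qⁱ(g⁻¹Qg)) = g^(2^i) ⊗ Qⁱ(g⁻¹Qg) + Qⁱg ⊗ (g⁻¹Qg)^(2^i) + (g⁻¹Qg)^(2^i) ⊗ Qⁱg
+ Qⁱ(g⁻¹Qg) ⊗ g^(2^i)` for `i ≥ 1`, where `Qⁱg = Qⁱ(X 0)`. -/
def IsPsiR (Q : P →ₗ[F2] P) (ψ : P →ₐ[F2] P ⊗[F2] P) : Prop :=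
  ψ (X 0) = X 0 ⊗ₜ[F2] X 0 ∧
  ψ (X 1) = X 0 ⊗ₜ[F2] X 1 + X 1 ⊗ₜ[F2] X 0 ∧
  ∀ i : ℕ, 1 ≤ i →
    ψ (X (i + 1)) =
      ((X 0) ^ (2 ^ i)) ⊗ₜ[F2] (X (i + 1))
      + ((⇑Q)^[i] (X 0)) ⊗ₜ[F2] ((X 1) ^ (2 ^ i))
      + ((X 1) ^ (2 ^ i)) ⊗ₜ[F2] ((⇑Q)^[i] (X 0))
      + (X (i + 1)) ⊗ₜ[F2] ((X 0) ^ (2 ^ i))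

/-- `π` is the family of projections: `π s` is the 𝔽₂-linear endomorphism fixing
every monomial of dimension `s` (with respect to the variable-dimension function
`dimv`) and annihilating every monomial of other dimensions. -/
def IsPi (dimv : ℕ → ℕ) (π : ℕ → P →ₗ[F2] P) : Prop :=
  ∀ (s : ℕ) (m : ℕ →₀ ℕ) (c : F2),
    π s (monomial m c) = if mwt dimv m = s then monomial m c else 0

section Aux

lemma mwt_zero' (w : ℕ → ℕ) : mwt w 0 = 0 := Finsupp.sum_zero_index

lemma mwt_add' (w : ℕ → ℕ) (m₁ m₂ : ℕ →₀ ℕ) : mwt w (m₁ + m₂) = mwt w m₁ + mwt w m₂ :=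
  Finsupp.sum_add_index' (fun _ => zero_mul _) (fun a b₁ b₂ => add_mul b₁ b₂ (w a))

lemma mwt_single' (w : ℕ → ℕ) (i e : ℕ) : mwt w (Finsupp.single i e) = e * w i :=
  Finsupp.sum_single_index (zero_mul _)

lemma mwt_finset_sum (w : ℕ → ℕ) (S : Finset ℕ) (f : ℕ → ℕ →₀ ℕ) :
    mwt w (∑ j ∈ S, f j) = ∑ j ∈ S, mwt w (f j) := by
  classical
  induction S using Finset.cons_induction with
  | empty => simp [mwt_zero']
  | cons a S ha ih => simp [Finset.sum_insert ha, mwt_add', ih]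

/-- exponent vector of `X 0 ^ N * ∏_{j ∈ S} X (j+1)` -/
noncomputable def mk0 (S : Finset ℕ) (N : ℕ) : ℕ →₀ ℕ :=
  Finsupp.single 0 N + ∑ j ∈ S, Finsupp.single (j + 1) 1

lemma prod_monomial_one (S : Finset ℕ) (f : ℕ → (ℕ →₀ ℕ)) :
    (∏ j ∈ S, (monomial (f j) (1 : F2) : P)) = monomial (∑ j ∈ S, f j) 1 := by
  classical
  induction S using Finset.cons_induction with
  | empty => simp
  | cons a S ha ih => simp [Finset.prod_insert ha, Finset.sum_insert ha, ih, monomial_mul]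

lemma X0_prod (S : Finset ℕ) (N : ℕ) :
    (X 0 : P) ^ N * ∏ j ∈ S, X (j + 1) = monomial (mk0 S N) 1 := by
  classical
  have h1 : ∀ j ∈ S, (X (j + 1) : P) = monomial (Finsupp.single (j + 1) 1) 1 := by
    intro j _
    rw [← X_pow_eq_monomial, pow_one]
  rw [Finset.prod_congr rfl h1, prod_monomial_one, X_pow_eq_monomial, monomial_mul, one_mul, mk0]

lemma mwt_mk0 (S : Finset ℕ) (N : ℕ) :
    mwt dB (mk0 S N) = ∑ j ∈ S, (2 ^ (j + 1) - 1) := by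
  classical
  rw [mk0, mwt_add', mwt_single', mwt_finset_sum]
  simp [mwt_single', dB]

lemma mk0_apply_succ (S : Finset ℕ) (N j : ℕ) :
    mk0 S N (j + 1) = if j ∈ S then 1 else 0 := by
  classical
  rw [mk0, Finsupp.add_apply, Finsupp.single_apply, if_neg (by omega), zero_add,
    Finsupp.finset_sum_apply]
  rw [Finset.sum_congr rfl (fun k _ => ?_), Finset.sum_ite_eq' S j (fun _ => 1)]
  rw [Finsupp.single_apply]
  simp

lemma mk0_inj {S S' : Finset ℕ} {N N' : ℕ} (h : mk0 S N = mk0 S' N') : S = S' := by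
  classical
  ext j
  have hj : mk0 S N (j + 1) = mk0 S' N' (j + 1) := by rw [h]
  rw [mk0_apply_succ, mk0_apply_succ] at hj
  by_cases hS : j ∈ S <;> by_cases hS' : j ∈ S' <;> simp_all

lemma prod_tmul_finset (S : Finset ℕ) (f g : ℕ → P) :
    (∏ j ∈ S, (f j ⊗ₜ[F2] g j : P ⊗[F2] P)) = (∏ j ∈ S, f j) ⊗ₜ[F2] (∏ j ∈ S, g j) := by
  classical
  induction S using Finset.cons_induction with
  | empty => simp [Algebra.TensorProduct.one_def]
  | cons a S ha ih => simp [Finset.prod_insert ha, ih, Algebra.TensorProduct.tmul_mul_tmul]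

end Aux

/-- Let `J ⊆ ℕ` be finite nonempty and `y = ∏_{j∈J} X (j+1) ∈ B`.
For `s ∈ ℕ`, `(π_s ⊗ id)(ψ_B(y)) ≠ 0` iff `s = Σ_{j∈J′} (2^(j+1) − 1)` for some
`J′ ⊆ J` (this computes the set `S(y)` for the top class of `Bβ_{2k}`). -/

theorem psiB_top_class_components (J : Finset ℕ) (hJ : J.Nonempty)
    (ψ : P →ₐ[F2] P ⊗[F2] P) (hψ : IsPsiB ψ)
    (π : ℕ → P →ₗ[F2] P) (hπ : IsPi dB π)
    (y : P) (hy : y = ∏ j ∈ J, X (j + 1)) (s : ℕ) :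
    TensorProduct.map (π s) (LinearMap.id : P →ₗ[F2] P) (ψ y) ≠ 0 ↔
      ∃ J' ⊆ J, s = ∑ j ∈ J', (2 ^ (j + 1) - 1) := by
  classical
  obtain ⟨hψ0, hψi⟩ := hψ
  -- exponent vectors of the two tensor factors of the term indexed by `t ⊆ J`
  set mL : Finset ℕ → (ℕ →₀ ℕ) := fun t => mk0 (J \ t) (∑ j ∈ t, 2 ^ (j + 1)) with hmL
  set mR : Finset ℕ → (ℕ →₀ ℕ) := fun t => mk0 t (∑ j ∈ J \ t, 2 ^ (j + 1)) with hmR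
  -- Step 1: expand ψ y
  have hexp : ψ y = ∑ t ∈ J.powerset,
      (monomial (mL t) (1 : F2)) ⊗ₜ[F2] (monomial (mR t) (1 : F2)) := by
    rw [hy, map_prod]
    have h1 : ∀ j ∈ J, ψ (X (j + 1)) =
        (((X 0 : P) ^ (2 ^ (j + 1))) ⊗ₜ[F2] (X (j + 1))
          + (X (j + 1)) ⊗ₜ[F2] ((X 0 : P) ^ (2 ^ (j + 1)))) := by
      intro j _
      exact hψi (j + 1) (Nat.succ_le_succ (Nat.zero_le j))
    rw [Finset.prod_congr rfl h1, Finset.prod_add]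
    refine Finset.sum_congr rfl fun t ht => ?_
    rw [prod_tmul_finset, prod_tmul_finset, Algebra.TensorProduct.tmul_mul_tmul]
    congr 1
    · rw [Finset.prod_pow_eq_pow_sum, X0_prod]
    · rw [mul_comm, Finset.prod_pow_eq_pow_sum, X0_prod]
  -- Step 2: apply π_s ⊗ id
  have hres : TensorProduct.map (π s) (LinearMap.id : P →ₗ[F2] P) (ψ y) =
      ∑ t ∈ J.powerset,
        if (∑ j ∈ J \ t, (2 ^ (j + 1) - 1)) = s then
          (monomial (mL t) (1 : F2)) ⊗ₜ[F2] (monomial (mR t) (1 : F2)) else 0 := by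
    rw [hexp, map_sum]
    refine Finset.sum_congr rfl fun t ht => ?_
    rw [TensorProduct.map_tmul, LinearMap.id_apply, hπ s (mL t) 1, hmL]
    simp only [mwt_mk0]
    split <;> simp
  by_cases h : ∃ J' ⊆ J, s = ∑ j ∈ J', (2 ^ (j + 1) - 1)
  · simp only [h, iff_true]
    obtain ⟨J', hJ'sub, hs⟩ := h
    set t0 : Finset ℕ := J \ J' with ht0def
    have ht0 : t0 ∈ J.powerset := Finset.mem_powerset.2 (Finset.sdiff_subset)
    have hJt0 : J \ t0 = J' := sdiff_sdiff_eq_self hJ'sub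
    set φ : P ⊗[F2] P →ₗ[F2] F2 :=
      (TensorProduct.lid F2 F2).toLinearMap ∘ₗ
        TensorProduct.map (lcoeff F2 (mL t0)) (lcoeff F2 (mR t0)) with hφ
    intro h0
    have hφ0 : φ (TensorProduct.map (π s) (LinearMap.id : P →ₗ[F2] P) (ψ y)) = 0 := by
      rw [h0, map_zero]
    rw [hres, map_sum] at hφ0
    have hsum : ∀ t ∈ J.powerset,
        φ (if (∑ j ∈ J \ t, (2 ^ (j + 1) - 1)) = s then
          (monomial (mL t) (1 : F2)) ⊗ₜ[F2] (monomial (mR t) (1 : F2)) else 0)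
        = if t = t0 then 1 else 0 := by
      intro t ht
      rw [Finset.mem_powerset] at ht
      by_cases htt0 : t = t0
      · subst htt0
        rw [if_pos (by rw [hJt0, ← hs]), if_pos rfl, hφ]
        simp [TensorProduct.map_tmul, lcoeff_apply, coeff_monomial]
      · rw [if_neg htt0]
        have hne : mL t ≠ mL t0 := by
          intro hEq
          apply htt0
          have hdiff : J \ t = J \ t0 := mk0_inj hEq
          have : J \ (J \ t) = J \ (J \ t0) := by rw [hdiff]
          rwa [sdiff_sdiff_eq_self ht, sdiff_sdiff_eq_self (Finset.mem_powerset.1 ht0)] at this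
        split
        · rw [hφ]
          simp [TensorProduct.map_tmul, lcoeff_apply, coeff_monomial, if_neg hne]
        · rw [map_zero]
    rw [Finset.sum_congr rfl hsum, Finset.sum_ite_eq' J.powerset t0 (fun _ => (1 : F2)),
      if_pos ht0] at hφ0
    exact one_ne_zero hφ0
  · simp only [h, iff_false, not_not]
    rw [hres]
    refine Finset.sum_eq_zero fun t ht => ?_
    rw [if_neg]
    intro hc
    exact h ⟨J \ t, Finset.sdiff_subset, hc.symm⟩
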